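/- Let K ⊆ V ⊗ k be a characteristic subspace and let v′ ∈ Ṽ be an isotropic vector with ⟨v, v′⟩ ≠ 0. Then there is exactly one characteristic subspace K̃ ⊆ Ṽ ⊗ k such that v ⊗ 1 ∉ K̃, π_v(K̃) = K, and v′ ⊗ 1 ∈ K̃. -/

import Mathlib

open TensorProduct

section Basics

variable (p : ℕ) [Fact p.Prime]
variable (k : Type*) [Field k] [CharP k p] [Algebra (ZMod p) k]

/-- The `p`-th power map on `k` as a `ZMod p`-linear map. -/
noncomputable def frobL : k →ₗ[ZMod p] k where
  toFun x := x ^ p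
  map_add' x y := add_pow_char x y p
  map_smul' c x := by
    simp only [Algebra.smul_def, mul_pow, RingHom.id_apply]
    congr 1
    rw [← map_pow, ZMod.pow_card]

@[simp] lemma frobL_apply (x : k) : frobL p k x = x ^ p := rfl

instance frobSurj [IsAlgClosed k] : RingHomSurjective (frobenius k p) := by
  constructor
  intro y
  obtain ⟨z, hz⟩ := IsAlgClosed.exists_pow_nat_eq y (n := p) (Fact.out (p := p.Prime)).pos
  exact ⟨z, by simpa [frobenius_def] using hz⟩

variable (V : Type*) [AddCommGroup V] [Module (ZMod p) V]

private lemma rT_smul (c : k) (m : k ⊗[ZMod p] V) :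
    LinearMap.rTensor V (frobL p k) (c • m) = c ^ p • LinearMap.rTensor V (frobL p k) m := by
  induction m using TensorProduct.induction_on with
  | zero => simp
  | tmul a x => simp [TensorProduct.smul_tmul', smul_eq_mul, mul_pow]
  | add x y hx hy => simp [smul_add, hx, hy]

/-- The Frobenius-semilinear bijection `φ` of `k ⊗ V` determined by `φ(s ⊗ x) = s^p ⊗ x`. -/
noncomputable def phiT : (k ⊗[ZMod p] V) →ₛₗ[frobenius k p] (k ⊗[ZMod p] V) where
  toFun := LinearMap.rTensor V (frobL p k)
  map_add' x y := map_add _ x y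
  map_smul' c m := by
    show LinearMap.rTensor V (frobL p k) (c • m) = (frobenius k p) c • LinearMap.rTensor V (frobL p k) m
    rw [rT_smul, frobenius_def]

@[simp] lemma phiT_apply (m : k ⊗[ZMod p] V) :
    phiT p k V m = LinearMap.rTensor V (frobL p k) m := rfl

/-- A bilinear form is non-degenerate if its radical is zero. -/
def Nondeg {R M : Type*} [CommSemiring R] [AddCommMonoid M] [Module R M]
    (b : M →ₗ[R] M →ₗ[R] R) : Prop :=
  ∀ x, (∀ y, b x y = 0) → x = 0

/-- A bilinear form is non-neutral if there is no totally isotropic subspace of half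
dimension. -/
def NonNeutral {R M : Type*} [CommRing R] [AddCommGroup M] [Module R M]
    (b : M →ₗ[R] M →ₗ[R] R) : Prop :=
  ¬ ∃ W : Submodule R M, (∀ x ∈ W, ∀ y ∈ W, b x y = 0) ∧
      2 * Module.finrank R ↥W = Module.finrank R M

variable {p k V}

/-- A characteristic subspace of `V ⊗ k`, where `dim V = 2σ₀`: a totally isotropic
`k`-subspace of dimension `σ₀` with `dim (K + φ K) = σ₀ + 1`. -/
def IsCharSub [IsAlgClosed k] (σ₀ : ℕ) (b : LinearMap.BilinForm (ZMod p) V)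
    (K : Submodule k (k ⊗[ZMod p] V)) : Prop :=
  (∀ x ∈ K, ∀ y ∈ K, b.baseChange k x y = 0) ∧
  Module.finrank k ↥K = σ₀ ∧
  Module.finrank k ↥(K ⊔ K.map (phiT p k V)) = σ₀ + 1

/-- `{x ∈ V : x ⊗ 1 ∈ K}` as an `𝔽_p`-subspace of `V`. -/
def KcapV (K : Submodule k (k ⊗[ZMod p] V)) : Submodule (ZMod p) V where
  carrier := {x | (1 : k) ⊗ₜ[ZMod p] x ∈ K}
  add_mem' := by
    intro a b ha hb
    simp only [Set.mem_setOf_eq] at *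
    rw [TensorProduct.tmul_add]
    exact K.add_mem ha hb
  zero_mem' := by
    simp only [Set.mem_setOf_eq, TensorProduct.tmul_zero]
    exact K.zero_mem
  smul_mem' := by
    intro c x hx
    simp only [Set.mem_setOf_eq] at *
    rw [TensorProduct.tmul_smul]
    exact K.smul_of_tower_mem c hx

end Basics

section Quot

variable {p : ℕ} [Fact p.Prime]
variable {Vt : Type*} [AddCommGroup Vt] [Module (ZMod p) Vt]

/-- The orthogonal complement of a vector. -/
def perp (b : LinearMap.BilinForm (ZMod p) Vt) (v : Vt) : Submodule (ZMod p) Vt :=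
  LinearMap.ker (b v)

lemma self_mem_perp {b : LinearMap.BilinForm (ZMod p) Vt} {v : Vt} (hv : b v v = 0) :
    v ∈ perp b v := LinearMap.mem_ker.mpr hv

/-- The line spanned by an isotropic vector `v`, inside `v^⊥`. -/
noncomputable def lineV (b : LinearMap.BilinForm (ZMod p) Vt) (v : Vt) (hv : b v v = 0) :
    Submodule (ZMod p) (perp b v) :=
  Submodule.span (ZMod p) {⟨v, self_mem_perp hv⟩}

lemma lineV_le (b : LinearMap.BilinForm (ZMod p) Vt) (v : Vt) (hv : b v v = 0)
    {P : Submodule (ZMod p) (perp b v)}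
    (h : (⟨v, self_mem_perp hv⟩ : perp b v) ∈ P) : lineV b v hv ≤ P :=
  Submodule.span_le.mpr (Set.singleton_subset_iff.mpr h)

/-- The quotient `v^⊥ / ⟨v⟩`. -/
noncomputable abbrev Vquot (b : LinearMap.BilinForm (ZMod p) Vt) (v : Vt)
    (hv : b v v = 0) := (perp b v) ⧸ (lineV b v hv)

/-- Restriction of the form to `v^⊥`. -/
noncomputable def bRes (b : LinearMap.BilinForm (ZMod p) Vt) (v : Vt) :
    LinearMap.BilinForm (ZMod p) (perp b v) :=
  b.compl₁₂ (perp b v).subtype (perp b v).subtype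

lemma bRes_apply (b : LinearMap.BilinForm (ZMod p) Vt) (v : Vt) (x y : perp b v) :
    bRes b v x y = b x y := by
  simp [bRes]

noncomputable def bQuotAux (b : LinearMap.BilinForm (ZMod p) Vt) (v : Vt)
    (hsymm : ∀ x y, b x y = b y x) (hv : b v v = 0) :
    (perp b v) →ₗ[ZMod p] (Vquot b v hv) →ₗ[ZMod p] (ZMod p) where
  toFun x := Submodule.liftQ (lineV b v hv) (bRes b v x) (lineV_le b v hv (by
    rw [LinearMap.mem_ker, bRes_apply, hsymm]
    exact LinearMap.mem_ker.mp x.2))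
  map_add' x y := by
    apply LinearMap.ext
    intro z
    obtain ⟨w, rfl⟩ := Submodule.Quotient.mk_surjective _ z
    simp only [Submodule.liftQ_apply, LinearMap.add_apply, bRes_apply,
      Submodule.coe_add, map_add]
  map_smul' c x := by
    apply LinearMap.ext
    intro z
    obtain ⟨w, rfl⟩ := Submodule.Quotient.mk_surjective _ z
    simp only [Submodule.liftQ_apply, LinearMap.smul_apply, bRes_apply,
      Submodule.coe_smul, map_smul, RingHom.id_apply, smul_eq_mul]

/-- The symmetric bilinear form induced on `v^⊥/⟨v⟩` by the form of `Ṽ`. -/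
noncomputable def bQuot (b : LinearMap.BilinForm (ZMod p) Vt) (v : Vt)
    (hsymm : ∀ x y, b x y = b y x) (hv : b v v = 0) :
    LinearMap.BilinForm (ZMod p) (Vquot b v hv) :=
  Submodule.liftQ (lineV b v hv) (bQuotAux b v hsymm hv) (lineV_le b v hv (by
    rw [LinearMap.mem_ker]
    apply LinearMap.ext
    intro z
    obtain ⟨w, rfl⟩ := Submodule.Quotient.mk_surjective _ z
    simp only [bQuotAux, LinearMap.coe_mk, AddHom.coe_mk, Submodule.liftQ_apply,
      bRes_apply, LinearMap.zero_apply]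
    exact LinearMap.mem_ker.mp w.2))

variable (k : Type*) [Field k] [CharP k p] [Algebra (ZMod p) k]

/-- The base change to `k` of the inclusion `v^⊥ ⊆ Ṽ`. -/
noncomputable def iotaPerp (b : LinearMap.BilinForm (ZMod p) Vt) (v : Vt) :
    (k ⊗[ZMod p] ↥(perp b v)) →ₗ[k] (k ⊗[ZMod p] Vt) :=
  LinearMap.baseChange k (perp b v).subtype

/-- The base change to `k` of the quotient map `v^⊥ → v^⊥/⟨v⟩`. -/
noncomputable def qMap (b : LinearMap.BilinForm (ZMod p) Vt) (v : Vt) (hv : b v v = 0) :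
    (k ⊗[ZMod p] ↥(perp b v)) →ₗ[k] (k ⊗[ZMod p] (Vquot b v hv)) :=
  LinearMap.baseChange k (lineV b v hv).mkQ

/-- `π_v(K̃)`: the image of `K̃ ∩ (v^⊥ ⊗ k)` under the quotient map
`v^⊥ ⊗ k → (v^⊥/⟨v⟩) ⊗ k`. -/
noncomputable def piV (b : LinearMap.BilinForm (ZMod p) Vt) (v : Vt) (hv : b v v = 0)
    (K : Submodule k (k ⊗[ZMod p] Vt)) : Submodule k (k ⊗[ZMod p] (Vquot b v hv)) :=
  (K.comap (iotaPerp k b v)).map (qMap k b v hv)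

end Quot
section Decomp

variable {p : ℕ} [Fact p.Prime]
variable {k : Type*} [Field k] [CharP k p] [Algebra (ZMod p) k]
variable {V Vt : Type*} [AddCommGroup V] [Module (ZMod p) V]
  [AddCommGroup Vt] [Module (ZMod p) Vt]

/-- The characteristic subspace `K(B)` of `Ṽ ⊗ k` attached to a characteristic subspace
`K ⊆ V ⊗ k` and a vector `B ∈ V ⊗ k`: the span of `{x + ⟨x,B⟩v : x ∈ K}` together with
`w + B + (B²/2)v`. -/
noncomputable def KB (bV : LinearMap.BilinForm (ZMod p) V) (j : V →ₗ[ZMod p] Vt)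
    (v w : Vt) (K : Submodule k (k ⊗[ZMod p] V)) (B : k ⊗[ZMod p] V) :
    Submodule k (k ⊗[ZMod p] Vt) :=
  Submodule.span k
    (((fun x => LinearMap.baseChange k j x + (bV.baseChange k x B) • ((1 : k) ⊗ₜ[ZMod p] v)) '' K) ∪
      {(1 : k) ⊗ₜ[ZMod p] w + LinearMap.baseChange k j B +
        ((bV.baseChange k B B) / 2) • ((1 : k) ⊗ₜ[ZMod p] v)})

/-- `π_v(K̃)` computed using the fixed orthogonal decomposition `Ṽ = V ⊕ ⟨v,w⟩`:
the subspace of those `x ∈ V ⊗ k` admitting a lift `x + c·(v ⊗ 1)` lying in `K̃`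
(equivalently, whose image in `Ṽ ⊗ k` lies in `K̃ + ⟨v ⊗ 1⟩`). -/
noncomputable def projSub (j : V →ₗ[ZMod p] Vt) (v : Vt)
    (Kt : Submodule k (k ⊗[ZMod p] Vt)) : Submodule k (k ⊗[ZMod p] V) :=
  (Kt ⊔ Submodule.span k {(1 : k) ⊗ₜ[ZMod p] v}).comap (LinearMap.baseChange k j)

lemma mem_projSub {j : V →ₗ[ZMod p] Vt} {v : Vt} {Kt : Submodule k (k ⊗[ZMod p] Vt)}
    (x : k ⊗[ZMod p] V) (c : k)
    (h : LinearMap.baseChange k j x + c • ((1 : k) ⊗ₜ[ZMod p] v) ∈ Kt) :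
    x ∈ projSub j v Kt := by
  have : LinearMap.baseChange k j x
      = (LinearMap.baseChange k j x + c • ((1 : k) ⊗ₜ[ZMod p] v))
        + (-c) • ((1 : k) ⊗ₜ[ZMod p] v) := by
    first
      | (rw [add_assoc, ← add_smul, add_neg_cancel, zero_smul, add_zero])
      | module
      | (simp only [neg_smul]; abel)
  rw [projSub, Submodule.mem_comap, this]
  exact Submodule.add_mem _ (Submodule.mem_sup_left h)
    (Submodule.mem_sup_right (Submodule.smul_mem _ _ (Submodule.mem_span_singleton_self _)))

variable [IsAlgClosed k]

/-- The condition `B - φ(B) ∈ K + φ(K)` defining `U(K)` before quotienting. -/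
def UCond (K : Submodule k (k ⊗[ZMod p] V)) (B : k ⊗[ZMod p] V) : Prop :=
  B - phiT p k V B ∈ K ⊔ K.map (phiT p k V)

/-- `{B ∈ V ⊗ k : B - φ(B) ∈ K + φ(K)}` as an additive group. -/
def Ugrp (K : Submodule k (k ⊗[ZMod p] V)) : AddSubgroup (k ⊗[ZMod p] V) where
  carrier := {B | B - phiT p k V B ∈ K ⊔ K.map (phiT p k V)}
  add_mem' := by
    intro a b ha hb
    simp only [Set.mem_setOf_eq] at *
    have e : a + b - phiT p k V (a + b) = (a - phiT p k V a) + (b - phiT p k V b) := by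
      rw [map_add]; abel
    rw [e]; exact Submodule.add_mem _ ha hb
  zero_mem' := by
    simp only [Set.mem_setOf_eq, map_zero, sub_zero]
    exact Submodule.zero_mem _
  neg_mem' := by
    intro a ha
    simp only [Set.mem_setOf_eq] at *
    have e : -a - phiT p k V (-a) = -(a - phiT p k V a) := by
      rw [map_neg]; abel
    rw [e]; exact Submodule.neg_mem _ ha

lemma mem_Ugrp {K : Submodule k (k ⊗[ZMod p] V)} {B : k ⊗[ZMod p] V} :
    B ∈ Ugrp K ↔ B - phiT p k V B ∈ K ⊔ K.map (phiT p k V) := Iff.rfl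

/-- The group `U(K) = {B : B - φ(B) ∈ K + φ(K)}/K`. -/
noncomputable abbrev UK (K : Submodule k (k ⊗[ZMod p] V)) :=
  (↥(Ugrp K)) ⧸ ((K.toAddSubgroup).addSubgroupOf (Ugrp K))

lemma one_tmul_mem_Ugrp (K : Submodule k (k ⊗[ZMod p] V)) (x : V) :
    (1 : k) ⊗ₜ[ZMod p] x ∈ Ugrp K := by
  have h : phiT p k V ((1 : k) ⊗ₜ[ZMod p] x) = (1 : k) ⊗ₜ[ZMod p] x := by
    rw [phiT_apply, LinearMap.rTensor_tmul, frobL_apply, one_pow]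
  rw [mem_Ugrp, h, sub_self]
  exact Submodule.zero_mem _

/-- The natural map `V → U(K)`, `x ↦ (x ⊗ 1) mod K`. -/
noncomputable def toUK (K : Submodule k (k ⊗[ZMod p] V)) : V →+ UK K :=
  (QuotientAddGroup.mk' ((K.toAddSubgroup).addSubgroupOf (Ugrp K))).comp
    (AddMonoidHom.codRestrict
      (((TensorProduct.mk (ZMod p) k V) (1 : k)).toAddMonoidHom) (Ugrp K)
      (fun x => one_tmul_mem_Ugrp K x))

/-- Iterates `φ^i(K)`. -/
noncomputable def phiPow (i : ℕ) (K : Submodule k (k ⊗[ZMod p] V)) :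
    Submodule k (k ⊗[ZMod p] V) :=
  (fun S : Submodule k (k ⊗[ZMod p] V) => S.map (phiT p k V))^[i] K

end Decomp

section Aux5

variable {p : ℕ} [Fact p.Prime]
variable {k : Type*} [Field k] [CharP k p] [Algebra (ZMod p) k]
variable {M N Vt : Type*} [AddCommGroup M] [Module (ZMod p) M]
  [AddCommGroup N] [Module (ZMod p) N] [AddCommGroup Vt] [Module (ZMod p) Vt]

lemma bcInj (f : M →ₗ[ZMod p] N) (hf : Function.Injective f) :
    Function.Injective (LinearMap.baseChange k f) := by
  obtain ⟨g, hg⟩ := f.exists_leftInverse_of_injective (LinearMap.ker_eq_bot.mpr hf)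
  have h : ∀ z, (LinearMap.baseChange k g) ((LinearMap.baseChange k f) z) = z := by
    intro z
    rw [← LinearMap.comp_apply, ← LinearMap.baseChange_comp, hg, LinearMap.baseChange_id,
      LinearMap.id_apply]
  exact Function.LeftInverse.injective h

lemma bc_pair_one (b : LinearMap.BilinForm (ZMod p) Vt) (x y : Vt) :
    b.baseChange k ((1:k) ⊗ₜ[ZMod p] x) ((1:k) ⊗ₜ[ZMod p] y)
      = algebraMap (ZMod p) k (b x y) := by
  rw [LinearMap.BilinForm.baseChange_tmul, mul_one, Algebra.smul_def, mul_one]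

lemma bc_vanish (b : LinearMap.BilinForm (ZMod p) Vt) (x : Vt) (f : M →ₗ[ZMod p] Vt)
    (h : ∀ m, b x (f m) = 0) (u : k ⊗[ZMod p] M) :
    b.baseChange k ((1:k) ⊗ₜ[ZMod p] x) (f.baseChange k u) = 0 := by
  induction u using TensorProduct.induction_on with
  | zero => simp
  | tmul s m =>
      rw [LinearMap.baseChange_tmul, LinearMap.BilinForm.baseChange_tmul, h m]
      simp
  | add a c ha hc => simp [map_add, ha, hc]

lemma bc_symm (b : LinearMap.BilinForm (ZMod p) Vt) (hsymm : ∀ x y, b x y = b y x)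
    (z w : k ⊗[ZMod p] Vt) : b.baseChange k z w = b.baseChange k w z := by
  induction z using TensorProduct.induction_on generalizing w with
  | zero => simp
  | tmul s x =>
      induction w using TensorProduct.induction_on with
      | zero => simp
      | tmul t y => rw [LinearMap.BilinForm.baseChange_tmul,
          LinearMap.BilinForm.baseChange_tmul, hsymm x y, mul_comm]
      | add w1 w2 h1 h2 => simp [map_add, h1, h2]
  | add z1 z2 h1 h2 => simp [map_add, h1 w, h2 w]

lemma phiT_tmul (s : k) (x : M) : phiT p k M (s ⊗ₜ[ZMod p] x) = (s ^ p) ⊗ₜ[ZMod p] x := by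
  rw [phiT_apply, LinearMap.rTensor_tmul, frobL_apply]

lemma phiT_one_tmul (x : M) : phiT p k M ((1:k) ⊗ₜ[ZMod p] x) = (1:k) ⊗ₜ[ZMod p] x := by
  rw [phiT_tmul, one_pow]

lemma phiT_bc (f : M →ₗ[ZMod p] N) (u : k ⊗[ZMod p] M) :
    phiT p k N (f.baseChange k u) = f.baseChange k (phiT p k M u) := by
  induction u using TensorProduct.induction_on with
  | zero => simp
  | tmul s m => rw [LinearMap.baseChange_tmul, phiT_tmul, phiT_tmul, LinearMap.baseChange_tmul]
  | add a c ha hc => simp [map_add, ha, hc]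

lemma map_phiT_bc [IsAlgClosed k] (f : M →ₗ[ZMod p] N) (S : Submodule k (k ⊗[ZMod p] M)) :
    (S.map (f.baseChange k)).map (phiT p k N) = (S.map (phiT p k M)).map (f.baseChange k) := by
  ext z
  simp only [Submodule.mem_map]
  constructor
  · rintro ⟨w, ⟨u, hu, rfl⟩, rfl⟩
    exact ⟨phiT p k M u, ⟨u, hu, rfl⟩, (phiT_bc f u).symm⟩
  · rintro ⟨w, ⟨u, hu, rfl⟩, rfl⟩
    exact ⟨f.baseChange k u, ⟨u, hu, rfl⟩, phiT_bc f u⟩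

lemma finrank_map_inj {X Y : Type*} [AddCommGroup X] [Module k X] [AddCommGroup Y] [Module k Y]
    (f : X →ₗ[k] Y) (hf : Function.Injective f) (S : Submodule k X) :
    Module.finrank k ↥(S.map f) = Module.finrank k ↥S :=
  (LinearEquiv.finrank_eq (Submodule.equivMapOfInjective f hf S)).symm

lemma finrank_sup_span {X : Type*} [AddCommGroup X] [Module k X] [FiniteDimensional k X]
    (S : Submodule k X) {x : X} (hx : x ∉ S) (hx0 : x ≠ 0) :
    Module.finrank k ↥(S ⊔ Submodule.span k {x}) = Module.finrank k ↥S + 1 := by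
  have hinf : S ⊓ Submodule.span k {x} = ⊥ := by
    rw [eq_bot_iff]
    intro y hy
    rw [Submodule.mem_inf] at hy
    obtain ⟨hyS, hysp⟩ := hy
    obtain ⟨c, rfl⟩ := Submodule.mem_span_singleton.mp hysp
    rcases eq_or_ne c 0 with rfl | hc
    · simp
    · have : x ∈ S := by
        simpa [smul_smul, inv_mul_cancel₀ hc] using S.smul_mem c⁻¹ hyS
      exact absurd this hx
  have h := Submodule.finrank_sup_add_finrank_inf_eq S (Submodule.span k {x})
  rw [hinf, finrank_span_singleton hx0] at h
  simpa using h

end Aux5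
section Setting5

set_option linter.unusedSectionVars false

variable {p : ℕ} [Fact p.Prime]
variable {Vt : Type*} [AddCommGroup Vt] [Module (ZMod p) Vt]

/-- `W = v^⊥ ∩ v'^⊥`. -/
noncomputable def Wsub (b : LinearMap.BilinForm (ZMod p) Vt) (v v' : Vt) :
    Submodule (ZMod p) Vt :=
  LinearMap.ker (b v) ⊓ LinearMap.ker (b v')

lemma Wsub_le_perp (b : LinearMap.BilinForm (ZMod p) Vt) (v v' : Vt) :
    Wsub b v v' ≤ perp b v := inf_le_left

lemma mem_Wsub {b : LinearMap.BilinForm (ZMod p) Vt} {v v' x : Vt} :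
    x ∈ Wsub b v v' ↔ b v x = 0 ∧ b v' x = 0 := by
  simp [Wsub, Submodule.mem_inf, LinearMap.mem_ker]

variable (b : LinearMap.BilinForm (ZMod p) Vt) (v v' : Vt)

noncomputable def rhoFun (x : Vt) : Vt :=
  x - ((b v' x) / (b v v')) • v - ((b v x) / (b v v')) • v'

lemma rhoFun_mem (hsymm : ∀ x y, b x y = b y x) (hv : b v v = 0) (hv' : b v' v' = 0)
    (hl : b v v' ≠ 0) (x : Vt) : rhoFun b v v' x ∈ Wsub b v v' := by
  rw [mem_Wsub]
  constructor
  · simp only [rhoFun, map_sub, map_smul, smul_eq_mul, hv, mul_zero]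
    field_simp
    ring
  · simp only [rhoFun, map_sub, map_smul, smul_eq_mul, hv', mul_zero]
    rw [hsymm v' v]
    field_simp
    ring

noncomputable def rhoMap (hsymm : ∀ x y, b x y = b y x) (hv : b v v = 0) (hv' : b v' v' = 0)
    (hl : b v v' ≠ 0) : Vt →ₗ[ZMod p] (Wsub b v v') where
  toFun x := ⟨rhoFun b v v' x, rhoFun_mem b v v' hsymm hv hv' hl x⟩
  map_add' x y := by
    apply Subtype.ext
    simp only [rhoFun, map_add, add_div, add_smul, Submodule.coe_add]
    abel
  map_smul' c x := by
    apply Subtype.ext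
    simp only [rhoFun, map_smul, smul_eq_mul, mul_div_assoc, mul_smul, RingHom.id_apply,
      SetLike.val_smul, smul_sub]

lemma rho_decomp (hsymm : ∀ x y, b x y = b y x) (hv : b v v = 0) (hv' : b v' v' = 0)
    (hl : b v v' ≠ 0) (x : Vt) :
    x = ↑(rhoMap b v v' hsymm hv hv' hl x)
        + ((b v' x) / (b v v')) • v + ((b v x) / (b v v')) • v' := by
  simp only [rhoMap, LinearMap.coe_mk, AddHom.coe_mk, rhoFun]
  abel

/-- The map `W → v^⊥/⟨v⟩`. -/
noncomputable def eMap (hv : b v v = 0) : (Wsub b v v') →ₗ[ZMod p] Vquot b v hv :=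
  (lineV b v hv).mkQ ∘ₗ (Submodule.inclusion (Wsub_le_perp b v v'))

lemma eMap_bijective (hsymm : ∀ x y, b x y = b y x) (hv : b v v = 0)
    (hl : b v v' ≠ 0) : Function.Bijective (eMap b v v' hv) := by
  constructor
  · intro w w' hww'
    have h : Submodule.inclusion (Wsub_le_perp b v v') w
        - Submodule.inclusion (Wsub_le_perp b v v') w' ∈ lineV b v hv := by
      rw [← Submodule.Quotient.eq]
      exact hww'
    obtain ⟨c, hc⟩ := Submodule.mem_span_singleton.mp h
    have hc' : (w : Vt) - (w' : Vt) = c • v := congrArg Subtype.val hc.symm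
    have hbv' : b v' ((w : Vt) - (w' : Vt)) = 0 := by
      rw [map_sub, (mem_Wsub.mp w.2).2, (mem_Wsub.mp w'.2).2, sub_zero]
    rw [hc', map_smul, smul_eq_mul, hsymm v' v] at hbv'
    have hc0 : c = 0 := by
      rcases mul_eq_zero.mp hbv' with h0 | h0
      · exact h0
      · exact absurd h0 hl
    apply Subtype.ext
    rw [← sub_eq_zero, hc', hc0, zero_smul]
  · intro q
    obtain ⟨⟨x, hx⟩, rfl⟩ := Submodule.Quotient.mk_surjective _ q
    have hxperp : b v x = 0 := hx
    set c : ZMod p := b v' x / b v v' with hcdef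
    have hw : x - c • v ∈ Wsub b v v' := by
      rw [mem_Wsub]
      constructor
      · rw [map_sub, map_smul, hxperp, hv, smul_eq_mul, mul_zero, sub_zero]
      · rw [map_sub, map_smul, smul_eq_mul, hsymm v' v, hcdef]
        field_simp
        ring
    refine ⟨⟨x - c • v, hw⟩, ?_⟩
    show Submodule.Quotient.mk _ = Submodule.Quotient.mk _
    rw [Submodule.Quotient.eq]
    have : Submodule.inclusion (Wsub_le_perp b v v') ⟨x - c • v, hw⟩
        - (⟨x, hx⟩ : perp b v) = (-c) • ⟨v, self_mem_perp hv⟩ := by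
      apply Subtype.ext
      show (x - c • v) - x = (-c) • v
      rw [neg_smul]
      abel
    rw [this]
    exact Submodule.smul_mem _ _ (Submodule.mem_span_singleton_self _)

noncomputable def eEquiv (hsymm : ∀ x y, b x y = b y x) (hv : b v v = 0)
    (hl : b v v' ≠ 0) : (Wsub b v v') ≃ₗ[ZMod p] Vquot b v hv :=
  LinearEquiv.ofBijective _ (eMap_bijective b v v' hsymm hv hl)

lemma bQuot_eMap (hsymm : ∀ x y, b x y = b y x) (hv : b v v = 0)
    (w w' : Wsub b v v') :
    bQuot b v hsymm hv (eMap b v v' hv w) (eMap b v v' hv w') = b w w' := by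
  simp [eMap, bQuot, bQuotAux, bRes, Submodule.mkQ_apply, Submodule.liftQ_apply]

variable {k : Type*} [Field k] [CharP k p] [Algebra (ZMod p) k]

lemma bc_compat (hsymm : ∀ x y, b x y = b y x) (hv : b v v = 0)
    (u u' : k ⊗[ZMod p] (Wsub b v v')) :
    (bQuot b v hsymm hv).baseChange k
        ((eMap b v v' hv).baseChange k u) ((eMap b v v' hv).baseChange k u')
      = b.baseChange k ((Wsub b v v').subtype.baseChange k u)
          ((Wsub b v v').subtype.baseChange k u') := by
  induction u using TensorProduct.induction_on generalizing u' with
  | zero => simp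
  | tmul s w =>
      induction u' using TensorProduct.induction_on with
      | zero => simp
      | tmul t w' =>
          rw [LinearMap.baseChange_tmul, LinearMap.baseChange_tmul,
            LinearMap.baseChange_tmul, LinearMap.baseChange_tmul,
            LinearMap.BilinForm.baseChange_tmul, LinearMap.BilinForm.baseChange_tmul,
            bQuot_eMap b v v' hsymm hv]
          rfl
      | add w1 w2 h1 h2 =>
          simp only [LinearMap.baseChange_tmul] at h1 h2
          simp [map_add, h1, h2]
  | add z1 z2 h1 h2 => simp [map_add, h1 u', h2 u']

end Setting5
set_option maxHeartbeats 2000000 in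
theorem stmt5 (p : ℕ) [Fact p.Prime] (hp : p ≠ 2)
    (k : Type*) [Field k] [IsAlgClosed k] [CharP k p] [Algebra (ZMod p) k]
    (σ0 : ℕ)
    (Vt : Type*) [AddCommGroup Vt] [Module (ZMod p) Vt]
    (b : LinearMap.BilinForm (ZMod p) Vt)
    (hsymm : ∀ x y, b x y = b y x) (hnd : Nondeg b) (hnn : NonNeutral b)
    (hdim : Module.finrank (ZMod p) Vt = 2 * σ0 + 2)
    (v : Vt) (hv0 : v ≠ 0) (hv : b v v = 0)
    (K : Submodule k (k ⊗[ZMod p] (Vquot b v hv)))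
    (hK : IsCharSub σ0 (bQuot b v hsymm hv) K)
    (v' : Vt) (hv'0 : v' ≠ 0) (hv' : b v' v' = 0) (hvv' : b v v' ≠ 0) :
    ∃! Kt : Submodule k (k ⊗[ZMod p] Vt),
      IsCharSub (σ0 + 1) b Kt ∧ (1 : k) ⊗ₜ[ZMod p] v ∉ Kt ∧
        piV k b v hv Kt = K ∧ (1 : k) ⊗ₜ[ZMod p] v' ∈ Kt := by
  classical
  haveI hfinVt : Module.Finite (ZMod p) Vt :=
    Module.finite_of_finrank_pos (by rw [hdim]; omega)
  haveI : Module.Finite k (k ⊗[ZMod p] Vt) := inferInstance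
  set ν : k ⊗[ZMod p] Vt := (1:k) ⊗ₜ[ZMod p] v with hνdef
  set ν' : k ⊗[ZMod p] Vt := (1:k) ⊗ₜ[ZMod p] v' with hν'def
  set W : Submodule (ZMod p) Vt := Wsub b v v' with hWdef
  set J : (k ⊗[ZMod p] W) →ₗ[k] (k ⊗[ZMod p] Vt) := W.subtype.baseChange k with hJdef
  have hJinj : Function.Injective J := bcInj _ W.injective_subtype
  set e : W ≃ₗ[ZMod p] Vquot b v hv := eEquiv b v v' hsymm hv hvv' with hedef
  set E : (k ⊗[ZMod p] W) →ₗ[k] (k ⊗[ZMod p] Vquot b v hv) :=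
    (eMap b v v' hv).baseChange k with hEdef
  set E' : (k ⊗[ZMod p] Vquot b v hv) →ₗ[k] (k ⊗[ZMod p] W) :=
    (e.symm.toLinearMap).baseChange k with hE'def
  have hE'E : ∀ u, E' (E u) = u := by
    intro u
    rw [hE'def, hEdef, ← LinearMap.comp_apply, ← LinearMap.baseChange_comp]
    have h1 : e.symm.toLinearMap ∘ₗ eMap b v v' hv = LinearMap.id :=
      LinearMap.ext fun w => e.symm_apply_apply w
    rw [h1, LinearMap.baseChange_id, LinearMap.id_apply]
  have hEE' : ∀ z, E (E' z) = z := by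
    intro z
    rw [hE'def, hEdef, ← LinearMap.comp_apply, ← LinearMap.baseChange_comp]
    have h1 : eMap b v v' hv ∘ₗ e.symm.toLinearMap = LinearMap.id :=
      LinearMap.ext fun q => e.apply_symm_apply q
    rw [h1, LinearMap.baseChange_id, LinearMap.id_apply]
  have hE'inj : Function.Injective E' := fun a c h => by rw [← hEE' a, h, hEE' c]
  have hEinj : Function.Injective E := fun a c h => by
    rw [← hE'E a, h, hE'E c]
  -- pairing facts
  have hBνJ : ∀ u, b.baseChange k ν (J u) = 0 := fun u =>
    bc_vanish b v W.subtype (fun m => (mem_Wsub.mp m.2).1) u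
  have hBν'J : ∀ u, b.baseChange k ν' (J u) = 0 := fun u =>
    bc_vanish b v' W.subtype (fun m => (mem_Wsub.mp m.2).2) u
  have halg : Function.Injective (algebraMap (ZMod p) k) := RingHom.injective _
  have hBνν' : b.baseChange k ν ν' = algebraMap (ZMod p) k (b v v') := bc_pair_one b v v'
  have hBν'ν : b.baseChange k ν' ν = algebraMap (ZMod p) k (b v v') := by
    rw [hν'def, hνdef, bc_pair_one b v' v, hsymm v' v]
  have hlamk : algebraMap (ZMod p) k (b v v') ≠ 0 := fun h =>
    hvv' (halg (by rw [h, map_zero]))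
  have hBνν : b.baseChange k ν ν = 0 := by rw [hνdef, bc_pair_one, hv, map_zero]
  have hBν'ν' : b.baseChange k ν' ν' = 0 := by rw [hν'def, bc_pair_one, hv', map_zero]
  have hν'0 : ν' ≠ 0 := by
    intro h
    rw [h, map_zero] at hBνν'
    exact hlamk hBνν'.symm
  have hν'J : ∀ S : Submodule k (k ⊗[ZMod p] W), ν' ∉ S.map J := by
    intro S hmem
    obtain ⟨u, _, hu⟩ := Submodule.mem_map.mp hmem
    apply hlamk
    rw [← hBνν', ← hu, hBνJ]
  -- decomposition
  have hsmul1 : ∀ (s : k) (y : Vt), s ⊗ₜ[ZMod p] y = s • ((1:k) ⊗ₜ[ZMod p] y) := by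
    intro s y
    rw [TensorProduct.smul_tmul', smul_eq_mul, mul_one]
  have hdec : ∀ z : k ⊗[ZMod p] Vt,
      z - ((b.baseChange k ν' z) / algebraMap (ZMod p) k (b v v')) • ν
        - ((b.baseChange k ν z) / algebraMap (ZMod p) k (b v v')) • ν'
        ∈ LinearMap.range J := by
    intro z
    induction z using TensorProduct.induction_on with
    | zero => simp
    | tmul s x =>
        refine ⟨s ⊗ₜ[ZMod p] (rhoMap b v v' hsymm hv hv' hvv' x), ?_⟩
        rw [hJdef, LinearMap.baseChange_tmul]
        have hcoe : (W.subtype (rhoMap b v v' hsymm hv hv' hvv' x) : Vt)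
            = x - ((b v' x)/(b v v')) • v - ((b v x)/(b v v')) • v' := rfl
        have hterm : ∀ (q : ZMod p) (y : Vt),
            ((q • s) / algebraMap (ZMod p) k (b v v')) • ((1:k) ⊗ₜ[ZMod p] y)
              = (q / (b v v')) • (s ⊗ₜ[ZMod p] y) := by
          intro q y
          rw [Algebra.smul_def, mul_div_right_comm, ← map_div₀ (algebraMap (ZMod p) k),
            mul_smul, algebraMap_smul, ← hsmul1 s y]
        rw [hcoe, TensorProduct.tmul_sub, TensorProduct.tmul_sub, TensorProduct.tmul_smul,
          TensorProduct.tmul_smul, hνdef, hν'def, LinearMap.BilinForm.baseChange_tmul,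
          LinearMap.BilinForm.baseChange_tmul, one_mul, hterm, hterm]
    | add z1 z2 h1 h2 =>
        have heq : z1 + z2 - ((b.baseChange k ν' (z1 + z2)) / algebraMap (ZMod p) k (b v v')) • ν
            - ((b.baseChange k ν (z1 + z2)) / algebraMap (ZMod p) k (b v v')) • ν'
            = (z1 - ((b.baseChange k ν' z1) / algebraMap (ZMod p) k (b v v')) • ν
                - ((b.baseChange k ν z1) / algebraMap (ZMod p) k (b v v')) • ν')
              + (z2 - ((b.baseChange k ν' z2) / algebraMap (ZMod p) k (b v v')) • ν
                - ((b.baseChange k ν z2) / algebraMap (ZMod p) k (b v v')) • ν') := by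
          rw [map_add, map_add, add_div, add_div, add_smul, add_smul]
          abel
        rw [heq]
        exact add_mem h1 h2
  -- relating iota, qMap, J, E
  have hsubcomp : (perp b v).subtype ∘ₗ Submodule.inclusion (Wsub_le_perp b v v')
      = W.subtype := by ext w; rfl
  have hιJ : ∀ u, iotaPerp k b v ((Submodule.inclusion (Wsub_le_perp b v v')).baseChange k u)
      = J u := by
    intro u
    show ((perp b v).subtype.baseChange k) _ = _
    rw [← LinearMap.comp_apply, ← LinearMap.baseChange_comp, hsubcomp, hJdef]
  have hqE : ∀ u, qMap k b v hv ((Submodule.inclusion (Wsub_le_perp b v v')).baseChange k u)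
      = E u := by
    intro u
    show ((lineV b v hv).mkQ.baseChange k) _ = _
    rw [← LinearMap.comp_apply, ← LinearMap.baseChange_comp]
    rfl
  have hιinj : Function.Injective (iotaPerp k b v) := bcInj _ (perp b v).injective_subtype
  have hιker : ∀ z, b.baseChange k ν (iotaPerp k b v z) = 0 := fun z =>
    bc_vanish b v (perp b v).subtype (fun m => m.2) z
  -- the key computation of piV
  have hcap : ∀ S : Submodule k (k ⊗[ZMod p] Vt),
      (∀ x ∈ S, ∀ y ∈ S, b.baseChange k x y = 0) → ν' ∈ S →
      piV k b v hv S = Submodule.map E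
        (Submodule.comap J (S ⊓ LinearMap.ker (b.baseChange k ν))) := by
    intro S hiso hν'S
    apply le_antisymm
    · rintro y hy
      obtain ⟨z, hz, rfl⟩ := Submodule.mem_map.mp hy
      have hz1 : iotaPerp k b v z ∈ S := Submodule.mem_comap.mp hz
      have hz2 : b.baseChange k ν (iotaPerp k b v z) = 0 := hιker z
      have hz3 : b.baseChange k ν' (iotaPerp k b v z) = 0 := hiso ν' hν'S _ hz1
      have hr := hdec (iotaPerp k b v z)
      rw [hz2, hz3, zero_div, zero_smul, zero_smul, sub_zero, sub_zero] at hr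
      obtain ⟨u, hu⟩ := hr
      have humem : u ∈ Submodule.comap J (S ⊓ LinearMap.ker (b.baseChange k ν)) := by
        rw [Submodule.mem_comap, hu]
        exact ⟨hz1, LinearMap.mem_ker.mpr hz2⟩
      have hzu : z = (Submodule.inclusion (Wsub_le_perp b v v')).baseChange k u := by
        apply hιinj
        rw [hιJ, hu]
      refine Submodule.mem_map.mpr ⟨u, humem, ?_⟩
      rw [hzu, hqE]
    · rintro y hy
      obtain ⟨u, hu, rfl⟩ := Submodule.mem_map.mp hy
      rw [Submodule.mem_comap] at hu
      refine Submodule.mem_map.mpr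
        ⟨(Submodule.inclusion (Wsub_le_perp b v v')).baseChange k u, ?_, hqE u⟩
      rw [Submodule.mem_comap, hιJ]
      exact hu.1
  -- the candidate
  set L : Submodule k (k ⊗[ZMod p] W) := K.map E' with hLdef
  set Kt : Submodule k (k ⊗[ZMod p] Vt) := L.map J ⊔ Submodule.span k {ν'} with hKtdef
  have hEL : L.map E = K := by
    ext z
    simp only [Submodule.mem_map]
    constructor
    · rintro ⟨w, ⟨x, hx, rfl⟩, rfl⟩
      rw [hEE']
      exact hx
    · intro hz
      exact ⟨E' z, ⟨z, hz, rfl⟩, hEE' z⟩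
  have hKtmem : ∀ z ∈ Kt, ∃ u ∈ L, ∃ c : k, z = J u + c • ν' := by
    intro z hz
    rw [hKtdef, Submodule.mem_sup] at hz
    obtain ⟨y, hy, w, hw, rfl⟩ := hz
    obtain ⟨u, hu, rfl⟩ := Submodule.mem_map.mp hy
    obtain ⟨c, rfl⟩ := Submodule.mem_span_singleton.mp hw
    exact ⟨u, hu, c, rfl⟩
  have hLpair : ∀ u1 ∈ L, ∀ u2 ∈ L, b.baseChange k (J u1) (J u2) = 0 := by
    intro u1 h1 u2 h2
    rw [← bc_compat b v v' hsymm hv]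
    obtain ⟨x1, hx1, rfl⟩ := Submodule.mem_map.mp h1
    obtain ⟨x2, hx2, rfl⟩ := Submodule.mem_map.mp h2
    have hEx1 : (eMap b v v' hv).baseChange k (E' x1) = x1 := hEE' x1
    have hEx2 : (eMap b v v' hv).baseChange k (E' x2) = x2 := hEE' x2
    rw [hEx1, hEx2]
    exact hK.1 x1 hx1 x2 hx2
  have hKtiso : ∀ x ∈ Kt, ∀ y ∈ Kt, b.baseChange k x y = 0 := by
    intro x hx y hy
    obtain ⟨u1, hu1, c1, rfl⟩ := hKtmem x hx
    obtain ⟨u2, hu2, c2, rfl⟩ := hKtmem y hy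
    have h1 : b.baseChange k (J u1) (J u2) = 0 := hLpair u1 hu1 u2 hu2
    have h2 : b.baseChange k (J u1) ν' = 0 := by
      rw [bc_symm b hsymm]; exact hBν'J u1
    have h3 : b.baseChange k ν' (J u2) = 0 := hBν'J u2
    simp [map_add, LinearMap.add_apply, map_smul, LinearMap.smul_apply, h1, h2, h3, hBν'ν']
  have hν'Kt : ν' ∈ Kt := Submodule.mem_sup_right (Submodule.mem_span_singleton_self ν')
  -- ranks
  have hrkL : Module.finrank k ↥L = σ0 := by
    rw [hLdef, finrank_map_inj E' hE'inj, hK.2.1]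
  have hrkJL : Module.finrank k ↥(L.map J) = σ0 := by
    rw [finrank_map_inj J hJinj, hrkL]
  have hrkKt : Module.finrank k ↥Kt = σ0 + 1 := by
    rw [hKtdef, finrank_sup_span (L.map J) (hν'J L) hν'0, hrkJL]
  -- phi
  have hφν' : phiT p k Vt ν' = ν' := phiT_one_tmul v'
  have hφKt : Kt.map (phiT p k Vt)
      = (L.map (phiT p k W)).map J ⊔ Submodule.span k {ν'} := by
    rw [hKtdef, Submodule.map_sup, map_phiT_bc, Submodule.map_span, Set.image_singleton, hφν']
  have hsupKt : Kt ⊔ Kt.map (phiT p k Vt)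
      = (L ⊔ L.map (phiT p k W)).map J ⊔ Submodule.span k {ν'} := by
    rw [hφKt, hKtdef, sup_sup_sup_comm, sup_idem, Submodule.map_sup]
  have hφL : L ⊔ L.map (phiT p k W)
      = (K ⊔ K.map (phiT p k (Vquot b v hv))).map E' := by
    rw [hLdef, Submodule.map_sup, map_phiT_bc]
  have hrkKtφ : Module.finrank k ↥(Kt ⊔ Kt.map (phiT p k Vt)) = σ0 + 1 + 1 := by
    rw [hsupKt, finrank_sup_span _ (hν'J _) hν'0, finrank_map_inj J hJinj, hφL,
      finrank_map_inj E' hE'inj, hK.2.2]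
  -- v ⊗ 1 ∉ Kt
  have hνKt : ν ∉ Kt := by
    intro hmem
    obtain ⟨u, hu, c, hc⟩ := hKtmem ν hmem
    have h0 := congrArg (b.baseChange k ν) hc
    rw [hBνν, map_add, map_smul, hBνJ, smul_eq_mul, zero_add, hBνν'] at h0
    have hc0 : c = 0 := by
      rcases mul_eq_zero.mp h0.symm with h | h
      · exact h
      · exact absurd h hlamk
    rw [hc0, zero_smul, add_zero] at hc
    have hz := hBν'J u
    rw [← hc, hBν'ν] at hz
    exact hlamk hz
  -- piV Kt = K
  have hKtcap : Kt ⊓ LinearMap.ker (b.baseChange k ν) = L.map J := by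
    apply le_antisymm
    · intro z hz
      rw [Submodule.mem_inf] at hz
      obtain ⟨u, hu, c, rfl⟩ := hKtmem z hz.1
      have h0 := LinearMap.mem_ker.mp hz.2
      rw [map_add, map_smul, hBνJ, smul_eq_mul, zero_add, hBνν'] at h0
      have hc0 : c = 0 := by
        rcases mul_eq_zero.mp h0 with h | h
        · exact h
        · exact absurd h hlamk
      rw [hc0, zero_smul, add_zero]
      exact Submodule.mem_map_of_mem hu
    · apply le_inf
      · exact le_sup_left
      · intro z hz
        obtain ⟨u, _, rfl⟩ := Submodule.mem_map.mp hz
        exact LinearMap.mem_ker.mpr (hBνJ u)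
  have hpiKt : piV k b v hv Kt = K := by
    rw [hcap Kt hKtiso hν'Kt, hKtcap, Submodule.comap_map_eq_of_injective hJinj, hEL]
  -- existence done; uniqueness
  refine ⟨Kt, ⟨⟨hKtiso, hrkKt, hrkKtφ⟩, hνKt, hpiKt, hν'Kt⟩, ?_⟩
  rintro Kt' ⟨⟨hiso', _, _⟩, hnmem', hpi', hmemv'⟩
  -- M' := Kt' ⊓ ker (Bk ν)
  set M' : Submodule k (k ⊗[ZMod p] Vt) := Kt' ⊓ LinearMap.ker (b.baseChange k ν) with hM'def
  have hsplit : Kt' = M' ⊔ Submodule.span k {ν'} := by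
    apply le_antisymm
    · intro z hz
      have hzz : z - ((b.baseChange k ν z) / algebraMap (ZMod p) k (b v v')) • ν' ∈ M' := by
        rw [hM'def, Submodule.mem_inf]
        constructor
        · exact Submodule.sub_mem _ hz (Submodule.smul_mem _ _ hmemv')
        · rw [LinearMap.mem_ker, map_sub, map_smul, hBνν', smul_eq_mul,
            div_mul_cancel₀ _ hlamk, sub_self]
      have : z = (z - ((b.baseChange k ν z) / algebraMap (ZMod p) k (b v v')) • ν')
          + ((b.baseChange k ν z) / algebraMap (ZMod p) k (b v v')) • ν' := by abel
      rw [this]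
      exact Submodule.add_mem _ (Submodule.mem_sup_left hzz)
        (Submodule.mem_sup_right (Submodule.smul_mem _ _ (Submodule.mem_span_singleton_self ν')))
    · apply sup_le
      · exact inf_le_left
      · rw [Submodule.span_le, Set.singleton_subset_iff]
        exact hmemv'
  have hM'range : M' ≤ LinearMap.range J := by
    intro z hz
    rw [hM'def, Submodule.mem_inf] at hz
    have hz2 := LinearMap.mem_ker.mp hz.2
    have hz3 : b.baseChange k ν' z = 0 := hiso' ν' hmemv' z hz.1
    have hr := hdec z
    rw [hz2, hz3, zero_div, zero_smul, zero_smul, sub_zero, sub_zero] at hr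
    exact hr
  have hcap' := hcap Kt' hiso' hmemv'
  rw [hpi'] at hcap'
  -- K = map E (comap J M')
  have hcomapJ : Submodule.comap J M' = L := by
    have h1 : (Submodule.comap J M').map E = K := hcap'.symm
    rw [hLdef, ← h1]
    ext u
    constructor
    · intro hu
      refine ⟨E u, Submodule.mem_map_of_mem hu, hE'E u⟩
    · rintro ⟨x, hx, rfl⟩
      obtain ⟨u', hu', rfl⟩ := Submodule.mem_map.mp hx
      rw [hE'E]
      exact hu'
  have hM'eq : M' = L.map J := by
    rw [← hcomapJ, Submodule.map_comap_eq, inf_eq_right.mpr hM'range]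
  rw [hsplit, hM'eq, hKtdef]
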